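/- arXiv:1910.06803 — 3 statements merged into one kernel-verified Lean document; each statement's English description precedes it below -/
import Mathlib

section
/- Proposition 1 (product of polar codes is a polar code): Let N_r = 2^{n_r}, N_c = 2^{n_c}, and let F_r ⊆ {0,…,N_r−1} and F_c ⊆ {0,…,N_c−1} be frozen sets of two polar codes with transformation matrices T_{N_r} = T_2^{⊗n_r} and T_{N_c} = T_2^{⊗n_c} over GF(2). Let z_r and z_c be the 0/1 vectors with zeros at the positions of F_r and F_c respectively and ones elsewhere, and set F = { m ∈ {0,…,N_cN_r−1} : (z_c ⊗ z_r)_m = 0 }. Then the set of row-vectorized product codewords { row(T_{N_c}ᵀ · U · T_{N_r}) : U an N_c×N_r matrix over GF(2) with U_{i,j} = 0 whenever i ∈ F_c or j ∈ F_r } equals the polar code { u · T_2^{⊗(n_c+n_r)} : u ∈ GF(2)^{N_cN_r} with u_m = 0 for all m ∈ F }, under the canonical identification of index sets. -/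
open Matrix

/-- Row-vectorization of a matrix: the row vector of length `m * n` whose
`(i·n+j)`-th entry is `A i j` (rows juxtaposed head-to-tail). -/
def rowVec {R : Type*} {m n : ℕ} (A : Matrix (Fin m) (Fin n) R) : Fin (m * n) → R :=
  fun k => A (finProdFinEquiv.symm k).1 (finProdFinEquiv.symm k).2

/-- Kronecker product of an `m × n` matrix and a `p × q` matrix: the `mp × nq`
matrix whose `((i·p+k),(j·q+l))` entry is `A i j * B k l`. -/
def kron {R : Type*} [Mul R] {m n p q : ℕ}
    (A : Matrix (Fin m) (Fin n) R) (B : Matrix (Fin p) (Fin q) R) :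
    Matrix (Fin (m * p)) (Fin (n * q)) R :=
  Matrix.of fun i j =>
    A (finProdFinEquiv.symm i).1 (finProdFinEquiv.symm j).1 *
      B (finProdFinEquiv.symm i).2 (finProdFinEquiv.symm j).2

/-- Kronecker product of row vectors: the row vector of length `m * n` whose
`(i·n+j)`-th entry is `u i * v j`. -/
def kronVec {R : Type*} [Mul R] {m n : ℕ} (u : Fin m → R) (v : Fin n → R) :
    Fin (m * n) → R :=
  fun k => u (finProdFinEquiv.symm k).1 * v (finProdFinEquiv.symm k).2

/-- The polar kernel `T₂ = [[1,0],[1,1]]` over GF(2). -/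
def T2 : Matrix (Fin 2) (Fin 2) (ZMod 2) := !![1, 0; 1, 1]

/-- `a`-fold Kronecker power of a square matrix. -/
def kronPow {R : Type*} [CommRing R] {N : ℕ} (M : Matrix (Fin N) (Fin N) R) :
    (a : ℕ) → Matrix (Fin (N ^ a)) (Fin (N ^ a)) R
  | 0 => 1
  | a + 1 =>
      Matrix.reindex (finCongr (by rw [pow_succ]; ring)) (finCongr (by rw [pow_succ]; ring))
        (kron M (kronPow M a))

section AuxLemmas
variable {R : Type*} [CommRing R]

lemma kron_apply' {m n p q : ℕ} (hp : 0 < p) (hq : 0 < q) (A : Matrix (Fin m) (Fin n) R)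
    (B : Matrix (Fin p) (Fin q) R) (i : Fin (m * p)) (j : Fin (n * q)) :
    kron A B i j = A ⟨i.val / p, (Nat.div_lt_iff_lt_mul hp).mpr i.isLt⟩
        ⟨j.val / q, (Nat.div_lt_iff_lt_mul hq).mpr j.isLt⟩ *
      B ⟨i.val % p, Nat.mod_lt _ hp⟩ ⟨j.val % q, Nat.mod_lt _ hq⟩ := by
  have h1 : (finProdFinEquiv.symm i).1 = (⟨i.val / p, (Nat.div_lt_iff_lt_mul hp).mpr i.isLt⟩ : Fin m) :=
    Fin.ext (by simp [Fin.coe_divNat])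
  have h2 : (finProdFinEquiv.symm j).1 = (⟨j.val / q, (Nat.div_lt_iff_lt_mul hq).mpr j.isLt⟩ : Fin n) :=
    Fin.ext (by simp [Fin.coe_divNat])
  have h3 : (finProdFinEquiv.symm i).2 = (⟨i.val % p, Nat.mod_lt _ hp⟩ : Fin p) :=
    Fin.ext (by simp [Fin.coe_modNat])
  have h4 : (finProdFinEquiv.symm j).2 = (⟨j.val % q, Nat.mod_lt _ hq⟩ : Fin q) :=
    Fin.ext (by simp [Fin.coe_modNat])
  rw [kron, Matrix.of_apply, h1, h2, h3, h4]

lemma kronPow_congr {N : ℕ} (M : Matrix (Fin N) (Fin N) R) {a b : ℕ} (h : a = b)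
    (i j : Fin (N ^ a)) :
    kronPow M a i j = kronPow M b (Fin.cast (by rw [h]) i) (Fin.cast (by rw [h]) j) := by
  subst h; rfl

lemma matrix_mk_congr {t : ℕ} (A : Matrix (Fin t) (Fin t) R) {x x' y y' : ℕ}
    (hx : x = x') (hy : y = y') (h1 : x < t) (h2 : y < t) (h1' : x' < t) (h2' : y' < t) :
    A ⟨x, h1⟩ ⟨y, h2⟩ = A ⟨x', h1'⟩ ⟨y', h2'⟩ := by subst hx; subst hy; rfl

lemma kronPow_succ_apply {N : ℕ} (hN : 0 < N) (M : Matrix (Fin N) (Fin N) R) (c : ℕ)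
    (x y : Fin (N ^ (c + 1))) :
    kronPow M (c + 1) x y =
      M ⟨x.val / N ^ c, (Nat.div_lt_iff_lt_mul (pow_pos hN c)).mpr
            (lt_of_lt_of_le x.isLt (le_of_eq (by rw [pow_succ, mul_comm])))⟩
        ⟨y.val / N ^ c, (Nat.div_lt_iff_lt_mul (pow_pos hN c)).mpr
            (lt_of_lt_of_le y.isLt (le_of_eq (by rw [pow_succ, mul_comm])))⟩ *
      kronPow M c ⟨x.val % N ^ c, Nat.mod_lt _ (pow_pos hN c)⟩
        ⟨y.val % N ^ c, Nat.mod_lt _ (pow_pos hN c)⟩ := by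
  rw [show kronPow M (c + 1) =
      Matrix.reindex (finCongr (by rw [pow_succ]; ring)) (finCongr (by rw [pow_succ]; ring))
        (kron M (kronPow M c)) from rfl,
    Matrix.reindex_apply, Matrix.submatrix_apply]
  exact kron_apply' (m := N) (n := N) (p := N ^ c) (q := N ^ c) (pow_pos hN c) (pow_pos hN c) M (kronPow M c) _ _

lemma kronPow_add_apply {N : ℕ} (hN : 0 < N) (M : Matrix (Fin N) (Fin N) R) (a b : ℕ)
    (i j : Fin (N ^ (a + b))) :
    kronPow M (a + b) i j =
      kronPow M a ⟨i.val / N ^ b, (Nat.div_lt_iff_lt_mul (pow_pos hN b)).mpr (lt_of_lt_of_le i.isLt (le_of_eq (pow_add N a b)))⟩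
        ⟨j.val / N ^ b, (Nat.div_lt_iff_lt_mul (pow_pos hN b)).mpr (lt_of_lt_of_le j.isLt (le_of_eq (pow_add N a b)))⟩ *
      kronPow M b ⟨i.val % N ^ b, Nat.mod_lt _ (pow_pos hN b)⟩
        ⟨j.val % N ^ b, Nat.mod_lt _ (pow_pos hN b)⟩ := by
  induction a with
  | zero =>
    rw [kronPow_congr M (Nat.zero_add b) i j]
    have hi : i.val < N ^ b := lt_of_lt_of_le i.isLt (le_of_eq (by rw [Nat.zero_add]))
    have hj : j.val < N ^ b := lt_of_lt_of_le j.isLt (le_of_eq (by rw [Nat.zero_add]))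
    have e1 : (Fin.cast (by rw [Nat.zero_add]) i : Fin (N ^ b)) = ⟨i.val % N ^ b, Nat.mod_lt _ (pow_pos hN b)⟩ :=
      Fin.ext (by simp [Nat.mod_eq_of_lt hi])
    have e2 : (Fin.cast (by rw [Nat.zero_add]) j : Fin (N ^ b)) = ⟨j.val % N ^ b, Nat.mod_lt _ (pow_pos hN b)⟩ :=
      Fin.ext (by simp [Nat.mod_eq_of_lt hj])
    rw [e1, e2]
    have h0 : ∀ x y : Fin (N ^ 0), kronPow M 0 x y = if x = y then 1 else 0 :=
      fun x y => Matrix.one_apply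
    rw [h0, if_pos (Fin.ext (by simp [Nat.div_eq_of_lt hi, Nat.div_eq_of_lt hj])), one_mul]
  | succ a ih =>
    rw [kronPow_congr M (Nat.succ_add a b) i j, kronPow_succ_apply hN M (a + b), ih,
      kronPow_succ_apply hN M a, ← mul_assoc]
    have hPd : (N : ℕ) ^ b ∣ N ^ (a + b) := pow_dvd_pow N (Nat.le_add_left b a)
    have hP : (N : ℕ) ^ (a + b) = N ^ b * N ^ a := by rw [← pow_add, Nat.add_comm]
    congr 1
    congr 1
    · exact matrix_mk_congr M
        (by simp only [Fin.coe_cast, Fin.val_mk]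
            rw [Nat.div_div_eq_div_mul, ← pow_add, Nat.add_comm b a])
        (by simp only [Fin.coe_cast, Fin.val_mk]
            rw [Nat.div_div_eq_div_mul, ← pow_add, Nat.add_comm b a]) _ _ _ _
    · exact matrix_mk_congr (kronPow M a)
        (by simp only [Fin.coe_cast, Fin.val_mk]
            rw [hP, Nat.mod_mul_right_div_self])
        (by simp only [Fin.coe_cast, Fin.val_mk]
            rw [hP, Nat.mod_mul_right_div_self]) _ _ _ _
    · exact matrix_mk_congr (kronPow M b)
        (by simp only [Fin.coe_cast, Fin.val_mk]
            exact Nat.mod_mod_of_dvd _ hPd)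
        (by simp only [Fin.coe_cast, Fin.val_mk]
            exact Nat.mod_mod_of_dvd _ hPd) _ _ _ _

lemma reindex_kronPow_add {N : ℕ} (hN : 0 < N) (M : Matrix (Fin N) (Fin N) R) (a b : ℕ) :
    Matrix.reindex (finCongr (pow_add N a b)) (finCongr (pow_add N a b)) (kronPow M (a + b)) =
      kron (kronPow M a) (kronPow M b) := by
  ext i j
  rw [Matrix.reindex_apply, Matrix.submatrix_apply,
    kron_apply' (pow_pos hN b) (pow_pos hN b) (kronPow M a) (kronPow M b) i j]
  exact kronPow_add_apply hN M a b _ _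

lemma rowVec_mul {m n p q : ℕ} (A : Matrix (Fin m) (Fin n) R) (B : Matrix (Fin p) (Fin q) R)
    (U : Matrix (Fin m) (Fin p) R) :
    rowVec (Aᵀ * U * B) = rowVec U ᵥ* kron A B := by
  funext k
  simp only [rowVec, Matrix.vecMul, dotProduct, Matrix.mul_apply, Matrix.transpose_apply]
  rw [← Equiv.sum_comp finProdFinEquiv
    (fun l => U (finProdFinEquiv.symm l).1 (finProdFinEquiv.symm l).2 * kron A B l k)]
  rw [Fintype.sum_prod_type]
  simp only [kron, Equiv.symm_apply_apply, Matrix.of_apply]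
  rw [Finset.sum_comm]
  refine Finset.sum_congr rfl fun j _ => ?_
  rw [Finset.sum_mul]
  exact Finset.sum_congr rfl fun i _ => by ring

end AuxLemmas

/-- The polar transformation matrix `T_{2^n} = T₂^{⊗n}` over GF(2). -/
def Tpow (n : ℕ) : Matrix (Fin (2 ^ n)) (Fin (2 ^ n)) (ZMod 2) := kronPow T2 n

/-- Proposition 1: the set of row-vectorized codewords of the product of two
polar codes with frozen sets `F_c`, `F_r` equals the polar code of length `2^{n_c+n_r}`
with transformation matrix `T₂^{⊗(n_c+n_r)}` and frozen set
`F = { m | (z_c ⊗ z_r)_m = 0 }`, under the canonical identification of index sets. -/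
theorem product_of_polar_codes_is_polar_code {n_c n_r : ℕ}
    (F_c : Finset (Fin (2 ^ n_c))) (F_r : Finset (Fin (2 ^ n_r)))
    (z_c : Fin (2 ^ n_c) → ℕ) (z_r : Fin (2 ^ n_r) → ℕ)
    (hz_c : ∀ i, z_c i = if i ∈ F_c then 0 else 1)
    (hz_r : ∀ j, z_r j = if j ∈ F_r then 0 else 1) :
    { x : Fin (2 ^ n_c * 2 ^ n_r) → ZMod 2 |
        ∃ U : Matrix (Fin (2 ^ n_c)) (Fin (2 ^ n_r)) (ZMod 2),
          (∀ i j, (i ∈ F_c ∨ j ∈ F_r) → U i j = 0) ∧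
            x = rowVec ((Tpow n_c)ᵀ * U * Tpow n_r) } =
      { x : Fin (2 ^ n_c * 2 ^ n_r) → ZMod 2 |
        ∃ u : Fin (2 ^ n_c * 2 ^ n_r) → ZMod 2,
          (∀ m, kronVec z_c z_r m = 0 → u m = 0) ∧
            x = u ᵥ* Matrix.reindex (finCongr (pow_add 2 n_c n_r))
                  (finCongr (pow_add 2 n_c n_r)) (Tpow (n_c + n_r)) } := by
  have hkey : Matrix.reindex (finCongr (pow_add 2 n_c n_r)) (finCongr (pow_add 2 n_c n_r))
      (Tpow (n_c + n_r)) = kron (Tpow n_c) (Tpow n_r) :=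
    reindex_kronPow_add (by norm_num) T2 n_c n_r
  have hz0 : ∀ m : Fin (2 ^ n_c * 2 ^ n_r), kronVec z_c z_r m = 0 ↔
      ((finProdFinEquiv.symm m).1 ∈ F_c ∨ (finProdFinEquiv.symm m).2 ∈ F_r) := by
    intro m
    rw [kronVec, hz_c, hz_r, Nat.mul_eq_zero]
    simp only [finProdFinEquiv_symm_apply]
    constructor
    · rintro (h | h) <;> [left; right] <;>
        · by_contra hc; simp [hc] at h
    · rintro (h | h) <;> [left; right] <;> simp [h]
  ext x
  simp only [Set.mem_setOf_eq, hkey]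
  constructor
  · rintro ⟨U, hU, rfl⟩
    refine ⟨rowVec U, ?_, rowVec_mul _ _ _⟩
    intro m hm
    rw [hz0] at hm
    exact hU _ _ hm
  · rintro ⟨u, hu, rfl⟩
    refine ⟨Matrix.of fun i j => u (finProdFinEquiv (i, j)), fun i j hij => ?_, ?_⟩
    · exact hu _ (by rw [hz0]; simpa using hij)
    · rw [rowVec_mul]
      have he : rowVec (Matrix.of fun i j => u (finProdFinEquiv (i, j))) = u := by
        funext k
        simp only [rowVec, Matrix.of_apply]
        rw [Prod.mk.eta, Equiv.apply_symm_apply]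
      rw [he]
end

section
/- Proposition 2 (row component frozen sets): Let N = N_cN_r with N_c = 2^{n_c}, N_r = 2^{n_r}, and let F ⊆ {0,…,N−1}. Let Z be the N_c × N_r matrix over ℕ with Z(k,l) = 0 if k·N_r+l ∈ F and Z(k,l) = 1 otherwise, and let Z_c = T_{N_c}ᵀ · Z be computed over the natural numbers, with the 0/1 entries of T_{N_c} read as naturals. Then for every i ∈ {0,…,N_c−1} and l ∈ {0,…,N_r−1}: Z_c(i,l) = 0 if and only if, for every u ∈ GF(2)^N with u_m = 0 for all m ∈ F, the l-th entry of the virtual input u_r^i = u · (T_{N_c}^{(·,i)} ⊗ I_{N_r}) equals 0. Hence the frozen set of the i-th row component polar code is F_r^i = { l : Z_c(i,l) = 0 }. -/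
open Matrix

/-- Proposition 2, row component frozen sets: with `Z` the 0/1 matrix over
ℕ vanishing exactly on the positions of `F` and `Z_c = T_{N_c}ᵀ * Z` computed over ℕ,
`Z_c(i,l) = 0` iff the `l`-th entry of the virtual input
`u_r^i = u · (T_{N_c}^{(·,i)} ⊗ I_{N_r})` is zero for every admissible `u`; hence the
frozen set of the `i`-th row component polar code is `F_r^i = { l | Z_c(i,l) = 0 }`. -/
theorem row_component_frozen_set {n_c n_r : ℕ}
    (F : Finset (Fin (2 ^ n_c * 2 ^ n_r)))
    (Z : Matrix (Fin (2 ^ n_c)) (Fin (2 ^ n_r)) ℕ)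
    (hZ : ∀ k l, Z k l = if finProdFinEquiv (k, l) ∈ F then 0 else 1)
    (Z_c : Matrix (Fin (2 ^ n_c)) (Fin (2 ^ n_r)) ℕ)
    (hZc : Z_c = ((Tpow n_c).map ZMod.val)ᵀ * Z) :
    ∀ (i : Fin (2 ^ n_c)) (l : Fin (2 ^ n_r)),
      Z_c i l = 0 ↔
        ∀ u : Fin (2 ^ n_c * 2 ^ n_r) → ZMod 2, (∀ m ∈ F, u m = 0) →
          (u ᵥ* kron (Matrix.of fun k (_ : Fin 1) => Tpow n_c k i)
              (1 : Matrix (Fin (2 ^ n_r)) (Fin (2 ^ n_r)) (ZMod 2)))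
            (finCongr (one_mul (2 ^ n_r)).symm l) = 0 := by
  intro i l
  have hmod : (Fin.cast (one_mul (2 ^ n_r)).symm l : Fin (1 * 2 ^ n_r)).modNat = l := by
    apply Fin.ext
    simp [Fin.coe_modNat, Nat.mod_eq_of_lt l.isLt]
  have key : ∀ u : Fin (2 ^ n_c * 2 ^ n_r) → ZMod 2,
      (u ᵥ* kron (Matrix.of fun k (_ : Fin 1) => Tpow n_c k i)
          (1 : Matrix (Fin (2 ^ n_r)) (Fin (2 ^ n_r)) (ZMod 2)))
        (finCongr (one_mul (2 ^ n_r)).symm l)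
      = ∑ k : Fin (2 ^ n_c), Tpow n_c k i * u (finProdFinEquiv (k, l)) := by
    intro u
    rw [Matrix.vecMul]
    rw [dotProduct]
    rw [← Equiv.sum_comp (finProdFinEquiv : Fin (2 ^ n_c) × Fin (2 ^ n_r) ≃ _)]
    simp only [kron, Matrix.of_apply, Equiv.symm_apply_apply, hmod]
    rw [Fintype.sum_prod_type]
    simp [Matrix.one_apply, hmod, mul_comm]
  have hZc' : Z_c i l = ∑ k, (Tpow n_c k i).val * Z k l := by
    subst hZc
    simp [Matrix.mul_apply, Matrix.transpose_apply, Matrix.map_apply]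
  rw [hZc', Finset.sum_eq_zero_iff]
  constructor
  · intro h u hu
    rw [key u]
    apply Finset.sum_eq_zero
    intro k _
    by_cases hk : finProdFinEquiv (k, l) ∈ F
    · rw [hu _ hk, mul_zero]
    · have h0 := h k (Finset.mem_univ k)
      rw [hZ] at h0
      simp only [hk, if_false, mul_one, Nat.mul_eq_zero] at h0
      have : Tpow n_c k i = 0 := by
        simpa [ZMod.val_eq_zero] using h0
      rw [this, zero_mul]
  · intro h k _
    rw [hZ]
    by_cases hk : finProdFinEquiv (k, l) ∈ F
    · simp [hk]
    · simp only [hk, if_false, mul_one]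
      have hu := h (fun m => if m = finProdFinEquiv (k, l) then 1 else 0) (by
        intro m hm
        simp only [ite_eq_right_iff]
        intro he
        exact absurd (he ▸ hm) hk)
      rw [key] at hu
      simp only [Equiv.apply_eq_iff_eq, Prod.mk.injEq, and_true, mul_ite, mul_one,
        mul_zero, Finset.sum_ite_eq', Finset.mem_univ, if_true] at hu
      rw [hu]
      rfl
end

section
/- Proposition 2 (column component frozen sets): Let N = N_cN_r with N_c = 2^{n_c}, N_r = 2^{n_r}, and let F ⊆ {0,…,N−1}. Let Z be the N_c × N_r matrix over ℕ with Z(k,l) = 0 if k·N_r+l ∈ F and Z(k,l) = 1 otherwise, and let Z_r = Z · T_{N_r} be computed over the natural numbers, with the 0/1 entries of T_{N_r} read as naturals. Then for every j ∈ {0,…,N_r−1} and m ∈ {0,…,N_c−1}: Z_r(m,j) = 0 if and only if, for every u ∈ GF(2)^N with u_k = 0 for all k ∈ F, the m-th entry of the virtual input u_c^j = u · (I_{N_c} ⊗ T_{N_r}^{(·,j)}) equals 0. Hence the frozen set of the j-th column component polar code is F_c^j = { m : Z_r(m,j) = 0 }. -/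
open Matrix

/-- Proposition 2, column component frozen sets: with `Z` the 0/1 matrix
over ℕ vanishing exactly on the positions of `F` and `Z_r = Z * T_{N_r}` computed over ℕ,
`Z_r(m,j) = 0` iff the `m`-th entry of the virtual input
`u_c^j = u · (I_{N_c} ⊗ T_{N_r}^{(·,j)})` is zero for every admissible `u`; hence the
frozen set of the `j`-th column component polar code is `F_c^j = { m | Z_r(m,j) = 0 }`. -/
theorem col_component_frozen_set {n_c n_r : ℕ}
    (F : Finset (Fin (2 ^ n_c * 2 ^ n_r)))
    (Z : Matrix (Fin (2 ^ n_c)) (Fin (2 ^ n_r)) ℕ)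
    (hZ : ∀ k l, Z k l = if finProdFinEquiv (k, l) ∈ F then 0 else 1)
    (Z_r : Matrix (Fin (2 ^ n_c)) (Fin (2 ^ n_r)) ℕ)
    (hZr : Z_r = Z * (Tpow n_r).map ZMod.val) :
    ∀ (j : Fin (2 ^ n_r)) (m : Fin (2 ^ n_c)),
      Z_r m j = 0 ↔
        ∀ u : Fin (2 ^ n_c * 2 ^ n_r) → ZMod 2, (∀ k ∈ F, u k = 0) →
          (u ᵥ* kron (1 : Matrix (Fin (2 ^ n_c)) (Fin (2 ^ n_c)) (ZMod 2))
              (Matrix.of fun l (_ : Fin 1) => Tpow n_r l j))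
            (finCongr (mul_one (2 ^ n_c)).symm m) = 0 := by
  intro j m
  -- the common reformulation
  have hP : Z_r m j = 0 ↔
      ∀ l : Fin (2 ^ n_r), finProdFinEquiv (m, l) ∉ F → Tpow n_r l j = 0 := by
    subst hZr
    rw [Matrix.mul_apply, Finset.sum_eq_zero_iff]
    constructor
    · intro h l hl
      have := h l (Finset.mem_univ l)
      rw [hZ, if_neg hl, one_mul, Matrix.map_apply] at this
      exact (ZMod.val_eq_zero _).mp this
    · intro h l _
      rw [hZ, Matrix.map_apply]
      by_cases hl : finProdFinEquiv (m, l) ∈ F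
      · rw [if_pos hl, zero_mul]
      · rw [if_neg hl, one_mul, h l hl, ZMod.val_zero]
  rw [hP]
  -- compute the vecMul entry as a sum over the second coordinate
  have hm1 : (finProdFinEquiv.symm (finCongr (mul_one (2 ^ n_c)).symm m)).1 = m := by
    ext
    simp [Fin.divNat]
  have hkron : ∀ (k : Fin (2 ^ n_c)) (l : Fin (2 ^ n_r)),
      kron (1 : Matrix (Fin (2 ^ n_c)) (Fin (2 ^ n_c)) (ZMod 2))
          (Matrix.of fun l (_ : Fin 1) => Tpow n_r l j) (finProdFinEquiv (k, l))
          (finCongr (mul_one (2 ^ n_c)).symm m)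
        = (1 : Matrix (Fin (2 ^ n_c)) (Fin (2 ^ n_c)) (ZMod 2)) k m * Tpow n_r l j := by
    intro k l
    show (1 : Matrix (Fin (2 ^ n_c)) (Fin (2 ^ n_c)) (ZMod 2))
        (finProdFinEquiv.symm (finProdFinEquiv (k, l))).1
        (finProdFinEquiv.symm (finCongr (mul_one (2 ^ n_c)).symm m)).1 *
      (Matrix.of fun l (_ : Fin 1) => Tpow n_r l j)
        (finProdFinEquiv.symm (finProdFinEquiv (k, l))).2
        (finProdFinEquiv.symm (finCongr (mul_one (2 ^ n_c)).symm m)).2 = _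
    rw [Equiv.symm_apply_apply, hm1]
    rfl
  have key : ∀ u : Fin (2 ^ n_c * 2 ^ n_r) → ZMod 2,
      (u ᵥ* kron (1 : Matrix (Fin (2 ^ n_c)) (Fin (2 ^ n_c)) (ZMod 2))
          (Matrix.of fun l (_ : Fin 1) => Tpow n_r l j))
        (finCongr (mul_one (2 ^ n_c)).symm m)
      = ∑ l : Fin (2 ^ n_r), u (finProdFinEquiv (m, l)) * Tpow n_r l j := by
    intro u
    rw [Matrix.vecMul, dotProduct]
    rw [← Equiv.sum_comp finProdFinEquiv
      (fun k => u k * kron 1 (Matrix.of fun l (_ : Fin 1) => Tpow n_r l j) k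
        (finCongr (mul_one (2 ^ n_c)).symm m))]
    rw [Fintype.sum_prod_type]
    rw [Finset.sum_comm]
    refine Finset.sum_congr rfl fun l _ => ?_
    rw [Finset.sum_eq_single m]
    · rw [hkron, Matrix.one_apply_eq, one_mul]
    · intro k _ hk
      rw [hkron, Matrix.one_apply_ne hk, zero_mul, mul_zero]
    · intro h
      exact absurd (Finset.mem_univ m) h
  constructor
  · intro h u hu
    rw [key]
    refine Finset.sum_eq_zero fun l _ => ?_
    by_cases hl : finProdFinEquiv (m, l) ∈ F
    · rw [hu _ hl, zero_mul]
    · rw [h l hl, mul_zero]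
  · intro h l hl
    have hu : ∀ k ∈ F, (fun k => if k = finProdFinEquiv (m, l) then (1 : ZMod 2) else 0) k = 0 := by
      intro k hk
      simp only
      rw [if_neg]
      rintro rfl
      exact hl hk
    have := h _ hu
    rw [key] at this
    simpa [finProdFinEquiv.injective.eq_iff, Finset.sum_ite_eq'] using this
end
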